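/- Let L be a field with a surjective discrete valuation ν, residue field l of characteristic p > 0, and let g be an automorphism of L of finite order d preserving ν. If g induces the identity on L_{≥0}/L_{≥1} and on L_{≥1}/L_{≥2}, then d is a power of p. -/

import Mathlib

open Multiplicative WithZero

private lemma stmt2_key {L : Type*} [Field L]
    (v : Valuation L (WithZero (Multiplicative ℤ)))
    (hv : Function.Surjective v)
    (g : L ≃+* L)
    (hpres : ∀ x : L, v (g x) = v x)
    (h1 : ∀ x : L, v x ≤ 1 → v (g x - x) ≤ ((ofAdd (-1 : ℤ) : Multiplicative ℤ) : WithZero (Multiplicative ℤ)))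
    (h2 : ∀ x : L, v x ≤ ((ofAdd (-1 : ℤ) : Multiplicative ℤ) : WithZero (Multiplicative ℤ)) →
      v (g x - x) ≤ ((ofAdd (-2 : ℤ) : Multiplicative ℤ) : WithZero (Multiplicative ℤ))) :
    ∀ x : L, x ≠ 0 → v (g x - x) ≤ ((ofAdd (-1 : ℤ) : Multiplicative ℤ) : WithZero (Multiplicative ℤ)) * v x := by
  -- uniformizer
  obtain ⟨π, hπ⟩ := hv ((ofAdd (-1 : ℤ) : Multiplicative ℤ) : WithZero (Multiplicative ℤ))
  have hπ0 : π ≠ 0 := by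
    intro h; rw [h, map_zero] at hπ; exact (WithZero.coe_ne_zero hπ.symm)
  -- main induction for elements of nonnegative additive valuation
  have main : ∀ k : ℕ, ∀ x : L, v x = ((ofAdd (-(k : ℤ)) : Multiplicative ℤ) : WithZero (Multiplicative ℤ)) →
      v (g x - x) ≤ ((ofAdd (-(k : ℤ) - 1) : Multiplicative ℤ) : WithZero (Multiplicative ℤ)) := by
    intro k
    induction k with
    | zero =>
      intro x hx
      have := h1 x (by rw [hx]; norm_num)
      simpa using this
    | succ k ih =>
      intro x hx
      have hx0 : x ≠ 0 := by
        intro h; rw [h, map_zero] at hx; exact (WithZero.coe_ne_zero hx.symm)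
      set y := x * π⁻¹ with hy
      have hxy : x = y * π := by rw [hy, mul_assoc, inv_mul_cancel₀ hπ0, mul_one]
      have hvy : v y = ((ofAdd (-(k : ℤ)) : Multiplicative ℤ) : WithZero (Multiplicative ℤ)) := by
        rw [hy, map_mul, map_inv₀, hx, hπ]
        rw [← WithZero.coe_inv, ← WithZero.coe_mul, ← ofAdd_neg, ← ofAdd_add]
        push_cast
        ring_nf
      have IH := ih y hvy
      have hsplit : g x - x = g π * (g y - y) + y * (g π - π) := by
        rw [hxy, map_mul]; ring
      rw [hsplit]
      refine le_trans (v.map_add _ _) (max_le ?_ ?_)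
      · rw [map_mul, hpres π, hπ]
        calc ((ofAdd (-1 : ℤ) : Multiplicative ℤ) : WithZero (Multiplicative ℤ)) * v (g y - y)
            ≤ ((ofAdd (-1 : ℤ) : Multiplicative ℤ) : WithZero (Multiplicative ℤ)) *
              ((ofAdd (-(k : ℤ) - 1) : Multiplicative ℤ) : WithZero (Multiplicative ℤ)) :=
              mul_le_mul_right IH _
          _ = _ := by
              rw [← WithZero.coe_mul, ← ofAdd_add]
              congr 2
              push_cast; ring
      · rw [map_mul, hvy]
        have := h2 π (le_of_eq hπ)
        calc ((ofAdd (-(k:ℤ)) : Multiplicative ℤ) : WithZero (Multiplicative ℤ)) * v (g π - π)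
            ≤ ((ofAdd (-(k : ℤ)) : Multiplicative ℤ) : WithZero (Multiplicative ℤ)) *
              ((ofAdd (-2 : ℤ) : Multiplicative ℤ) : WithZero (Multiplicative ℤ)) :=
              mul_le_mul_right this _
          _ = _ := by
              rw [← WithZero.coe_mul, ← ofAdd_add]
              congr 2
              push_cast; ring
  intro x hx0
  have hvx : v x ≠ 0 := by simpa [Valuation.ne_zero_iff] using hx0
  obtain ⟨γ, hγ⟩ := WithZero.ne_zero_iff_exists.mp hvx
  set n : ℤ := toAdd γ with hn
  have hγn : γ = ofAdd n := by simp [hn]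
  rcases le_or_gt n 0 with hle | hlt
  · have h := main (-n).toNat x (by
      rw [← hγ, hγn]; congr 2; omega)
    rw [← hγ, hγn, ← WithZero.coe_mul, ← ofAdd_add]
    refine le_trans h (le_of_eq ?_)
    congr 2
    omega
  · -- inverse trick
    have hgx0 : g x ≠ 0 := fun h => hx0 (by simpa using (map_eq_zero_iff g g.injective).mp h)
    have hinv : v x⁻¹ = ((ofAdd (-(n.toNat : ℤ)) : Multiplicative ℤ) : WithZero (Multiplicative ℤ)) := by
      rw [map_inv₀, ← hγ, hγn, ← WithZero.coe_inv, ← ofAdd_neg]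
      congr 2; omega
    have h := main n.toNat x⁻¹ hinv
    have hid : g x - x = -(g x * x) * (g x⁻¹ - x⁻¹) := by
      rw [map_inv₀]
      field_simp
      ring
    rw [hid, map_mul, v.map_neg, map_mul, hpres x]
    calc v x * v x * v (g x⁻¹ - x⁻¹)
        ≤ v x * v x * ((ofAdd (-(n.toNat : ℤ) - 1) : Multiplicative ℤ) : WithZero (Multiplicative ℤ)) :=
          mul_le_mul_right h _
      _ = ((ofAdd (-1 : ℤ) : Multiplicative ℤ) : WithZero (Multiplicative ℤ)) * v x := by
          rw [← hγ, hγn, ← WithZero.coe_mul, ← WithZero.coe_mul, ← WithZero.coe_mul,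
            ← ofAdd_add, ← ofAdd_add, ← ofAdd_add]
          congr 2
          omega


private lemma stmt2_pow {L : Type*} [Field L] (v : Valuation L (WithZero (Multiplicative ℤ)))
    (g : L ≃+* L) (hpres : ∀ x : L, v (g x) = v x)
    (key : ∀ x : L, x ≠ 0 → v (g x - x) ≤ ((ofAdd (-1 : ℤ) : Multiplicative ℤ) : WithZero (Multiplicative ℤ)) * v x) :
    ∀ n : ℕ, (∀ x : L, v ((g ^ n) x) = v x) ∧
      (∀ x : L, x ≠ 0 → v ((g ^ n) x - x) ≤ ((ofAdd (-1 : ℤ) : Multiplicative ℤ) : WithZero (Multiplicative ℤ)) * v x) := by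
  intro n
  induction n with
  | zero =>
    refine ⟨fun x => rfl, fun x hx => ?_⟩
    have h0 : (g ^ 0) x - x = 0 := by rw [pow_zero]; exact sub_eq_zero_of_eq rfl
    rw [h0, map_zero]
    exact zero_le'
  | succ n ih =>
    obtain ⟨ih1, ih2⟩ := ih
    have happ : ∀ x : L, (g ^ (n+1)) x = (g ^ n) (g x) := by
      intro x; rw [pow_succ]; rfl
    constructor
    · intro x; rw [happ, ih1, hpres]
    · intro x hx
      have hgx : g x ≠ 0 := fun h => hx (by simpa using (map_eq_zero_iff g g.injective).mp h)
      have split : (g ^ (n+1)) x - x = ((g ^ n) (g x) - g x) + (g x - x) := by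
        rw [happ]; ring
      rw [split]
      refine le_trans (v.map_add _ _) (max_le ?_ (key x hx))
      calc v ((g ^ n) (g x) - g x) ≤ _ * v (g x) := ih2 (g x) hgx
        _ = _ * v x := by rw [hpres]

private lemma stmt2_vq {L : Type*} [Field L] (v : Valuation L (WithZero (Multiplicative ℤ)))
    (p q : ℕ) (hp : p.Prime) (hq : q.Prime) (hqp : q ≠ p)
    [CharP (IsLocalRing.ResidueField v.valuationSubring) p] :
    v (q : L) = 1 := by
  have vnat : ∀ n : ℕ, v (n : L) ≤ 1 := by
    intro n
    induction n with
    | zero => simp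
    | succ n ih =>
      push_cast
      exact le_trans (v.map_add _ _) (max_le ih (le_of_eq v.map_one))
  refine le_antisymm (vnat q) ?_
  by_contra hlt
  rw [not_le] at hlt
  have hlt : v (q : L) < 1 := lt_of_le_of_ne (vnat q) (by intro h; rw [h] at hlt; exact lt_irrefl _ hlt)
  set Q : v.valuationSubring := (q : v.valuationSubring) with hQ
  have hQcoe : (Q : L) = (q : L) := by push_cast [hQ]; rfl
  have hnotunit : ¬ IsUnit Q := by
    intro hu
    obtain ⟨b, hb⟩ := isUnit_iff_exists_inv.mp hu
    have : v ((Q : L) * (b : L)) = 1 := by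
      rw [← Subring.coe_mul] at *
      rw [show (Q * b : v.valuationSubring) = 1 from hb]
      simp
    have hb1 : v (b : L) ≤ 1 := b.2
    have : (1 : WithZero (Multiplicative ℤ)) < 1 := by
      calc (1 : WithZero (Multiplicative ℤ)) = v ((Q:L)) * v ((b:L)) := by rw [← map_mul, this]
        _ ≤ v ((Q:L)) * 1 := mul_le_mul_right hb1 _
        _ = v ((Q:L)) := mul_one _
        _ < 1 := by rwa [hQcoe]
    exact lt_irrefl _ this
  have hmem : Q ∈ IsLocalRing.maximalIdeal v.valuationSubring :=
    (IsLocalRing.mem_maximalIdeal Q).mpr hnotunit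
  have hres : (IsLocalRing.residue v.valuationSubring) Q = 0 :=
    (Ideal.Quotient.eq_zero_iff_mem).mpr hmem
  have hcast : ((q : ℕ) : IsLocalRing.ResidueField v.valuationSubring) = 0 := by
    rw [← map_natCast (IsLocalRing.residue v.valuationSubring) q, ← hQ]
    exact hres
  have hpq : p ∣ q := (CharP.cast_eq_zero_iff _ p q).mp hcast
  exact hqp ((Nat.prime_dvd_prime_iff_eq hp hq).mp hpq).symm

private lemma stmt2_core {L : Type*} [Field L] (v : Valuation L (WithZero (Multiplicative ℤ)))
    (f : L ≃+* L) (q : ℕ) (hq : q.Prime)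
    (hPn : ∀ n : ℕ, (∀ x : L, v ((f ^ n) x) = v x) ∧
      (∀ x : L, x ≠ 0 → v ((f ^ n) x - x) ≤ ((ofAdd (-1 : ℤ) : Multiplicative ℤ) : WithZero (Multiplicative ℤ)) * v x))
    (hfq : f ^ q = 1) (x : L) (hx : f x ≠ x)
    (vq1 : v (q : L) = 1) : False := by
  have hx0 : x ≠ 0 := by
    rintro rfl
    exact hx (map_zero f)
  set z : L := f x - x with hz
  have hz0 : z ≠ 0 := sub_ne_zero_of_ne hx
  have hvz : v z ≠ 0 := by simpa [Valuation.ne_zero_iff] using hz0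
  have happ : ∀ j : ℕ, (f ^ (j + 1)) x - (f ^ j) x = (f ^ j) z := by
    intro j
    rw [pow_succ, hz, map_sub]
    rfl
  have hsum : ∑ j ∈ Finset.range q, (f ^ j) z = 0 := by
    have tele := Finset.sum_range_sub (fun j => (f ^ j) x) q
    simp only [happ] at tele
    rw [tele, hfq, pow_zero]
    simp
  have hdecomp : ∑ j ∈ Finset.range q, (f ^ j) z
      = (q : L) * z + ∑ j ∈ Finset.range q, ((f ^ j) z - z) := by
    rw [Finset.sum_sub_distrib, Finset.sum_const, Finset.card_range, nsmul_eq_mul]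
    ring
  have hr : v (∑ j ∈ Finset.range q, ((f ^ j) z - z))
      ≤ ((ofAdd (-1 : ℤ) : Multiplicative ℤ) : WithZero (Multiplicative ℤ)) * v z :=
    v.map_sum_le (fun j _ => (hPn j).2 z hz0)
  have hsmall : ((ofAdd (-1 : ℤ) : Multiplicative ℤ) : WithZero (Multiplicative ℤ)) * v z < v z := by
    obtain ⟨γ, hγ⟩ := WithZero.ne_zero_iff_exists.mp hvz
    rw [← hγ, ← WithZero.coe_mul, WithZero.coe_lt_coe]
    exact mul_lt_of_lt_one_left' γ (by
      rw [← ofAdd_zero]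
      exact Multiplicative.ofAdd_lt.mpr (by norm_num))
  have hqz : v ((q : L) * z) = v z := by rw [map_mul, vq1, one_mul]
  have : v (∑ j ∈ Finset.range q, (f ^ j) z) = v z := by
    rw [hdecomp]
    rw [v.map_add_eq_of_lt_left]
    · exact hqz
    · rw [hqz] at *
      exact lt_of_le_of_lt hr hsmall
  rw [hsum, map_zero] at this
  exact hvz this.symm

/-- if the residue field of a surjective discrete valuation on `L` has
characteristic `p > 0`, and `g` is a valuation-preserving field automorphism of `L`
of finite order `d` inducing the identity on `L_{≥0}/L_{≥1}` and on `L_{≥1}/L_{≥2}`,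
then `d` is a power of `p`. -/
theorem stmt2 (L : Type*) [Field L]
    (v : Valuation L (WithZero (Multiplicative ℤ)))
    (hv : Function.Surjective v)
    (p : ℕ) (hp : p.Prime)
    [CharP (IsLocalRing.ResidueField v.valuationSubring) p]
    (g : L ≃+* L) (d : ℕ) (hd : 0 < d)
    (hord : orderOf g = d)
    (hpres : ∀ x : L, v (g x) = v x)
    (h1 : ∀ x : L, v x ≤ 1 →
      v (g x - x) ≤ ((Multiplicative.ofAdd (-1 : ℤ) : Multiplicative ℤ) :
        WithZero (Multiplicative ℤ)))
    (h2 : ∀ x : L, v x ≤ ((Multiplicative.ofAdd (-1 : ℤ) : Multiplicative ℤ) :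
        WithZero (Multiplicative ℤ)) →
      v (g x - x) ≤ ((Multiplicative.ofAdd (-2 : ℤ) : Multiplicative ℤ) :
        WithZero (Multiplicative ℤ))) :
    ∃ m : ℕ, d = p ^ m := by
  have key := stmt2_key v hv g hpres h1 h2
  have hpow := stmt2_pow v g hpres key
  have hprime : ∀ {r : ℕ}, r.Prime → r ∣ d → r = p := by
    intro q hq hqd
    by_contra hqp
    set h : L ≃+* L := g ^ (d / q) with hh
    have hhq : h ^ q = 1 := by
      rw [hh, ← pow_mul, Nat.div_mul_cancel hqd, ← hord, pow_orderOf_eq_one]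
    have hne : h ≠ 1 := by
      intro he
      have hdvd : orderOf g ∣ d / q := orderOf_dvd_of_pow_eq_one he
      rw [hord] at hdvd
      have hdqpos : 0 < d / q := Nat.div_pos (Nat.le_of_dvd hd hqd) hq.pos
      have : d ≤ d / q := Nat.le_of_dvd hdqpos hdvd
      exact absurd this (not_le.mpr (Nat.div_lt_self hd hq.one_lt))
    obtain ⟨x, hx⟩ : ∃ x : L, h x ≠ x := by
      by_contra hc
      push_neg at hc
      exact hne (RingEquiv.ext hc)
    have hPn : ∀ n : ℕ, (∀ x : L, v ((h ^ n) x) = v x) ∧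
        (∀ x : L, x ≠ 0 → v ((h ^ n) x - x) ≤
          ((Multiplicative.ofAdd (-1 : ℤ) : Multiplicative ℤ) :
            WithZero (Multiplicative ℤ)) * v x) := by
      intro n
      rw [hh, ← pow_mul]
      exact hpow _
    exact stmt2_core v h q hq hPn hhq x hx (stmt2_vq v p q hp hq hqp)
  refine ⟨d.primeFactorsList.length, ?_⟩
  exact Nat.eq_prime_pow_of_unique_prime_dvd hd.ne' (fun hq hqd => hprime hq hqd)
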